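/- Under the shared-Bernoulli coupling of Greedy and OPT with geometric usage durations F_i = Geometric(p_i) and p = min_i p_i, LOST ≤ ((1 - p)/(1 + p)) · Greedy(I). -/

import Mathlib

open Finset

/-- An online policy for the online matching problem with reusable resources,
with `N` resources, `T` requests, and neighborhoods `Nbr`.  Upon arrival of
request `t`, the policy observes the time `t`, the set of currently available
resources, and the history of previously observed availability sets, and
matches the request to at most one available resource adjacent to `t`
(`none` means no match). -/
structure Policy (N T : ℕ) (Nbr : Fin T → Finset (Fin N)) where
  act : Fin T → Finset (Fin N) → List (Finset (Fin N)) → Option (Fin N)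
  feasible : ∀ t I hist i, act t I hist = some i → i ∈ I ∩ Nbr t

/-- Sample space of the shared-Bernoulli coupling for geometric usage
durations: `ω i t` is the return flag `P_{it} ~ Bernoulli (p i)`.  A resource
`i` that is unavailable returns at the start of time `t` iff `ω i t = true`;
this makes the usage duration of every match of `i` distributed as
`Geometric (p i)` on `{1, 2, ...}`. -/
abbrev Flags (N T : ℕ) := Fin N → Fin T → Bool

/-- One step of the dynamics at time `t`.  The state is the pair consisting of
the set of resources unavailable at the end of the previous step and the
history of observed availability sets. -/
def step {N T : ℕ} {Nbr : Fin T → Finset (Fin N)} (π : Policy N T Nbr)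
    (ω : Flags N T) (s : Finset (Fin N) × List (Finset (Fin N))) (t : Fin T) :
    Finset (Fin N) × List (Finset (Fin N)) :=
  let busy := s.1.filter fun i => ω i t = false
  let I : Finset (Fin N) := Finset.univ \ busy
  match π.act t I s.2 with
  | none => (busy, I :: s.2)
  | some i => (insert i busy, I :: s.2)

/-- The state just before step `n` (resources unavailable at the end of step
`n-1`, together with the observed history). -/
def stateUpTo {N T : ℕ} {Nbr : Fin T → Finset (Fin N)} (π : Policy N T Nbr)
    (ω : Flags N T) (n : ℕ) : Finset (Fin N) × List (Finset (Fin N)) :=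
  ((List.finRange T).take n).foldl (step π ω) (∅, [])

/-- `I_t`: the set of resources available at time `t` under policy `π`. -/
def avail {N T : ℕ} {Nbr : Fin T → Finset (Fin N)} (π : Policy N T Nbr)
    (ω : Flags N T) (t : Fin T) : Finset (Fin N) :=
  Finset.univ \ ((stateUpTo π ω t.val).1.filter fun i => ω i t = false)

/-- `A_t`: the resource matched at time `t` under policy `π` (`none` = no match). -/
def act {N T : ℕ} {Nbr : Fin T → Finset (Fin N)} (π : Policy N T Nbr)
    (ω : Flags N T) (t : Fin T) : Option (Fin N) :=
  π.act t (avail π ω t) (stateUpTo π ω t.val).2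

/-- The total reward collected by policy `π` on the sample path `ω`. -/
def reward {N T : ℕ} {Nbr : Fin T → Finset (Fin N)} (r : Fin N → ℝ)
    (π : Policy N T Nbr) (ω : Flags N T) : ℝ :=
  ∑ t : Fin T, (act π ω t).elim 0 r

/-- Probability of the flag configuration `ω` when `P_{it} ~ Bernoulli (p i)`
independently. -/
noncomputable def weight {N T : ℕ} (p : Fin N → ℝ) (ω : Flags N T) : ℝ :=
  ∏ i : Fin N, ∏ t : Fin T, if ω i t then p i else 1 - p i

/-- Expectation over the i.i.d. Bernoulli return flags. -/
noncomputable def expect {N T : ℕ} (p : Fin N → ℝ) (f : Flags N T → ℝ) : ℝ :=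
  ∑ ω : Flags N T, weight p ω * f ω

/-- The greedy policy: match the available neighboring resource of largest
index (equivalently, of highest reward, since rewards are sorted). -/
def greedy (N T : ℕ) (Nbr : Fin T → Finset (Fin N)) : Policy N T Nbr where
  act := fun t I _ => if h : (I ∩ Nbr t).Nonempty then some ((I ∩ Nbr t).max' h) else none
  feasible := by
    intro t I hist i hi
    try simp only at hi
    by_cases h : (I ∩ Nbr t).Nonempty
    · rw [dif_pos h, Option.some.injEq] at hi
      exact hi ▸ Finset.max'_mem _ h
    · rw [dif_neg h] at hi
      exact absurd hi (by simp)

/-- `Greedy(I)`: the expected total reward of the greedy policy. -/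
noncomputable def greedyVal (N T : ℕ) (Nbr : Fin T → Finset (Fin N))
    (r : Fin N → ℝ) (p : Fin N → ℝ) : ℝ :=
  expect p (reward r (greedy N T Nbr))

/-- `OPT(I)`: the optimal expected total reward over all (clairvoyant)
policies; such a policy knows the whole instance, including the request
sequence, but observes returns only as they occur. -/
noncomputable def optVal (N T : ℕ) (Nbr : Fin T → Finset (Fin N))
    (r : Fin N → ℝ) (p : Fin N → ℝ) : ℝ :=
  ⨆ π : Policy N T Nbr, expect p (reward r π)

/-- `LOST`: the expected reward collected by the benchmark policy `π` (playing
the role of `OPT`, coupled with Greedy via the shared Bernoulli return flags)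
at `(i, t)` such that `A*_t = i` and the event `O_{it}` occurs, where `O_{it}`
is the event that every resource `j ≥ i` is unavailable under Greedy at time
`t`. -/
noncomputable def lost (N T : ℕ) (Nbr : Fin T → Finset (Fin N)) (r : Fin N → ℝ)
    (pv : Fin N → ℝ) (π : Policy N T Nbr) : ℝ :=
  expect pv (fun ω => ∑ t : Fin T, ∑ i : Fin N,
    if act π ω t = some i ∧ (∀ j, i ≤ j → j ∉ avail (greedy N T Nbr) ω t)
    then r i else 0)


section Aux
variable {N T : ℕ} {Nbr : Fin T → Finset (Fin N)}

lemma stateUpTo_zero (π : Policy N T Nbr) (ω : Flags N T) :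
    stateUpTo π ω 0 = (∅, []) := rfl

lemma stateUpTo_succ (π : Policy N T Nbr) (ω : Flags N T) (n : ℕ) (h : n < T) :
    stateUpTo π ω (n+1) = step π ω (stateUpTo π ω n) ⟨n, h⟩ := by
  unfold stateUpTo
  rw [List.take_succ, List.foldl_append]
  have : (List.finRange T)[n]? = some ⟨n, h⟩ := by
    rw [List.getElem?_eq_getElem (by simpa using h)]
    simp
  rw [this]
  rfl

lemma stateUpTo_congr (π : Policy N T Nbr) {ω ω' : Flags N T} (n : ℕ)
    (h : ∀ i (s : Fin T), (s : ℕ) < n → ω i s = ω' i s) :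
    stateUpTo π ω n = stateUpTo π ω' n := by
  induction n with
  | zero => rfl
  | succ n ih =>
    rcases le_or_gt T n with hT | hT
    · have e1 : stateUpTo π ω (n+1) = stateUpTo π ω n := by
        unfold stateUpTo
        rw [List.take_of_length_le (by simpa using hT.trans (Nat.le_succ n)),
            List.take_of_length_le (by simpa using hT)]
      have e2 : stateUpTo π ω' (n+1) = stateUpTo π ω' n := by
        unfold stateUpTo
        rw [List.take_of_length_le (by simpa using hT.trans (Nat.le_succ n)),
            List.take_of_length_le (by simpa using hT)]
      rw [e1, e2]
      exact ih (fun i s hs => h i s (hs.trans (Nat.lt_succ_self n)))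
    · rw [stateUpTo_succ π ω n hT, stateUpTo_succ π ω' n hT,
          ih (fun i s hs => h i s (hs.trans (Nat.lt_succ_self n)))]
      unfold step
      have : ∀ i, ω i ⟨n, hT⟩ = ω' i ⟨n, hT⟩ := fun i => h i ⟨n, hT⟩ (Nat.lt_succ_self n)
      simp only [this]

end Aux

def flipAt {N T : ℕ} (ω : Flags N T) (i : Fin N) (t : Fin T) : Flags N T :=
  fun j s => if j = i ∧ s = t then !ω j s else ω j s

section Aux2
variable {N T : ℕ} {Nbr : Fin T → Finset (Fin N)}

lemma flipAt_ne {ω : Flags N T} {i : Fin N} {t : Fin T} {j : Fin N} {s : Fin T}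
    (h : ¬(j = i ∧ s = t)) : flipAt ω i t j s = ω j s := if_neg h

lemma flipAt_self (ω : Flags N T) (i : Fin N) (t : Fin T) :
    flipAt ω i t i t = !ω i t := if_pos ⟨rfl, rfl⟩

lemma flipAt_flipAt (ω : Flags N T) (i : Fin N) (t : Fin T) :
    flipAt (flipAt ω i t) i t = ω := by
  funext j s
  unfold flipAt
  by_cases h : j = i ∧ s = t
  · simp [h]
  · simp [h]

lemma stateUpTo_flipAt (π : Policy N T Nbr) (ω : Flags N T) (i : Fin N) (t : Fin T) :
    stateUpTo π (flipAt ω i t) (t : ℕ) = stateUpTo π ω (t : ℕ) :=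
  stateUpTo_congr π _ (fun j s hs => flipAt_ne (fun hc => absurd hs (by simp [hc.2])))

lemma avail_flipAt (π : Policy N T Nbr) (ω : Flags N T) {i : Fin N} (t : Fin T)
    (hi : i ∉ (stateUpTo π ω (t : ℕ)).1) :
    avail π (flipAt ω i t) t = avail π ω t := by
  unfold avail
  rw [stateUpTo_flipAt]
  congr 1
  apply Finset.filter_congr
  intro j hj
  have : ¬(j = i ∧ t = t) := fun hc => hi (hc.1 ▸ hj)
  rw [flipAt_ne this]

lemma act_flipAt (π : Policy N T Nbr) (ω : Flags N T) {i : Fin N} (t : Fin T)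
    (hi : i ∉ (stateUpTo π ω (t : ℕ)).1) :
    act π (flipAt ω i t) t = act π ω t := by
  unfold act
  rw [avail_flipAt π ω t hi, stateUpTo_flipAt]

lemma busy_succ (π : Policy N T Nbr) (ω : Flags N T) (t : Fin T) :
    (stateUpTo π ω ((t : ℕ)+1)).1 =
      (act π ω t).elim ((stateUpTo π ω (t : ℕ)).1.filter fun j => ω j t = false)
        (fun a => insert a ((stateUpTo π ω (t : ℕ)).1.filter fun j => ω j t = false)) := by
  rw [stateUpTo_succ π ω (t : ℕ) t.isLt]
  have ht : (⟨(t : ℕ), t.isLt⟩ : Fin T) = t := rfl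
  rw [ht]
  unfold step
  cases h : act π ω t with
  | none =>
      have h' : π.act t (Finset.univ \ (stateUpTo π ω (t : ℕ)).1.filter
          (fun j => ω j t = false)) (stateUpTo π ω (t : ℕ)).2 = none := h
      simp only [h']
      rfl
  | some a =>
      have h' : π.act t (Finset.univ \ (stateUpTo π ω (t : ℕ)).1.filter
          (fun j => ω j t = false)) (stateUpTo π ω (t : ℕ)).2 = some a := h
      simp only [h']
      rfl

lemma not_mem_avail {π : Policy N T Nbr} {ω : Flags N T} {t : Fin T} {j : Fin N} :
    j ∉ avail π ω t ↔ (j ∈ (stateUpTo π ω (t : ℕ)).1 ∧ ω j t = false) := by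
  unfold avail
  simp [Finset.mem_sdiff]

lemma greedy_act_def (ω : Flags N T) (t : Fin T) :
    act (greedy N T Nbr) ω t =
      if h : ((avail (greedy N T Nbr) ω t) ∩ Nbr t).Nonempty
      then some (((avail (greedy N T Nbr) ω t) ∩ Nbr t).max' h) else none := rfl

lemma greedy_act_ge {ω : Flags N T} {t : Fin T} {i : Fin N}
    (hi : i ∈ avail (greedy N T Nbr) ω t) (hn : i ∈ Nbr t) :
    ∃ a, act (greedy N T Nbr) ω t = some a ∧ i ≤ a := by
  have hne : ((avail (greedy N T Nbr) ω t) ∩ Nbr t).Nonempty :=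
    ⟨i, Finset.mem_inter.2 ⟨hi, hn⟩⟩
  refine ⟨_, ?_, Finset.le_max' _ i (Finset.mem_inter.2 ⟨hi, hn⟩)⟩
  rw [greedy_act_def, dif_pos hne]

lemma greedy_act_eq {ω : Flags N T} {t : Fin T} {i : Fin N}
    (hi : i ∈ avail (greedy N T Nbr) ω t) (hn : i ∈ Nbr t)
    (hmax : ∀ j, i < j → j ∉ avail (greedy N T Nbr) ω t) :
    act (greedy N T Nbr) ω t = some i := by
  obtain ⟨a, ha, hia⟩ := greedy_act_ge hi hn
  have hmem : a ∈ (avail (greedy N T Nbr) ω t) ∩ Nbr t := by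
    have hne : ((avail (greedy N T Nbr) ω t) ∩ Nbr t).Nonempty :=
      ⟨i, Finset.mem_inter.2 ⟨hi, hn⟩⟩
    have : act (greedy N T Nbr) ω t =
        some (((avail (greedy N T Nbr) ω t) ∩ Nbr t).max' hne) := by
      rw [greedy_act_def, dif_pos hne]
    rw [this] at ha
    injection ha with ha'
    rw [← ha']
    exact Finset.max'_mem _ _
  have : a ≤ i := by
    by_contra hlt
    exact hmax a (lt_of_not_ge hlt) (Finset.mem_inter.1 hmem).1
  rw [le_antisymm this hia] at ha
  exact ha
end Aux2

section Aux3
variable {N T : ℕ} {Nbr : Fin T → Finset (Fin N)}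

/-- Sum of rewards of resources busy under greedy but not under `π`. -/
noncomputable def dSum (r : Fin N → ℝ) (π : Policy N T Nbr) (ω : Flags N T) (n : ℕ) : ℝ :=
  ∑ j ∈ (stateUpTo (greedy N T Nbr) ω n).1 \ (stateUpTo π ω n).1, r j

lemma mem_diff_step {π : Policy N T Nbr} {ω : Flags N T} {t : Fin T} {j : Fin N}
    (hj : j ∈ (stateUpTo (greedy N T Nbr) ω ((t:ℕ)+1)).1 \ (stateUpTo π ω ((t:ℕ)+1)).1)
    (hjg : act (greedy N T Nbr) ω t ≠ some j) :
    j ∈ (stateUpTo (greedy N T Nbr) ω (t:ℕ)).1 \ (stateUpTo π ω (t:ℕ)).1 := by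
  rw [Finset.mem_sdiff] at hj ⊢
  obtain ⟨hjG, hjP⟩ := hj
  rw [busy_succ] at hjG hjP
  have hGf : j ∈ (stateUpTo (greedy N T Nbr) ω (t:ℕ)).1.filter (fun k => ω k t = false) := by
    cases hg : act (greedy N T Nbr) ω t with
    | none => rw [hg] at hjG; exact hjG
    | some a =>
        rw [hg] at hjG
        rcases Finset.mem_insert.1 hjG with h | h
        · exact absurd (hg.trans (congrArg some h.symm)) hjg
        · exact h
  rw [Finset.mem_filter] at hGf
  refine ⟨hGf.1, fun hP => ?_⟩
  have hPf : j ∈ (stateUpTo π ω (t:ℕ)).1.filter (fun k => ω k t = false) :=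
    Finset.mem_filter.2 ⟨hP, hGf.2⟩
  cases hp : act π ω t with
  | none => rw [hp] at hjP; exact hjP hPf
  | some a => rw [hp] at hjP; exact hjP (Finset.mem_insert_of_mem hPf)

lemma not_mem_diff_step {π : Policy N T Nbr} {ω : Flags N T} {t : Fin T} {i : Fin N}
    (hact : act π ω t = some i) :
    i ∉ (stateUpTo (greedy N T Nbr) ω ((t:ℕ)+1)).1 \ (stateUpTo π ω ((t:ℕ)+1)).1 := by
  rw [Finset.mem_sdiff, busy_succ π ω t, hact]
  intro h
  exact h.2 (Finset.mem_insert_self _ _)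

lemma dSum_nonneg (r : Fin N → ℝ) (hr0 : ∀ i, 0 ≤ r i) (π : Policy N T Nbr)
    (ω : Flags N T) (n : ℕ) : 0 ≤ dSum r π ω n :=
  Finset.sum_nonneg (fun j _ => hr0 j)

lemma dSum_le_general (r : Fin N → ℝ) (hr0 : ∀ i, 0 ≤ r i) (π : Policy N T Nbr)
    (ω : Flags N T) (t : Fin T) :
    dSum r π ω ((t:ℕ)+1) ≤ dSum r π ω (t:ℕ) + (act (greedy N T Nbr) ω t).elim 0 r := by
  unfold dSum
  cases hg : act (greedy N T Nbr) ω t with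
  | none =>
      simp only [Option.elim, add_zero]
      apply Finset.sum_le_sum_of_subset_of_nonneg
      · intro j hj
        exact mem_diff_step hj (by rw [hg]; exact fun h => by cases h)
      · exact fun j _ _ => hr0 j
  | some a =>
      simp only [Option.elim]
      calc ∑ j ∈ (stateUpTo (greedy N T Nbr) ω ((t:ℕ)+1)).1 \ (stateUpTo π ω ((t:ℕ)+1)).1, r j
          ≤ ∑ j ∈ insert a ((stateUpTo (greedy N T Nbr) ω (t:ℕ)).1 \ (stateUpTo π ω (t:ℕ)).1), r j := by
            apply Finset.sum_le_sum_of_subset_of_nonneg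
            · intro j hj
              by_cases hja : j = a
              · exact hja ▸ Finset.mem_insert_self _ _
              · exact Finset.mem_insert_of_mem (mem_diff_step hj (by
                  rw [hg]; intro h; exact hja (Option.some.inj h).symm))
            · exact fun j _ _ => hr0 j
        _ ≤ (∑ j ∈ (stateUpTo (greedy N T Nbr) ω (t:ℕ)).1 \ (stateUpTo π ω (t:ℕ)).1, r j) + r a := by
            by_cases ha : a ∈ (stateUpTo (greedy N T Nbr) ω (t:ℕ)).1 \ (stateUpTo π ω (t:ℕ)).1
            · rw [Finset.insert_eq_self.2 ha]
              exact le_add_of_nonneg_right (hr0 a)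
            · rw [Finset.sum_insert ha, add_comm]

lemma dSum_le_attempt (r : Fin N → ℝ) (hr0 : ∀ i, 0 ≤ r i) (π : Policy N T Nbr)
    (ω : Flags N T) (t : Fin T) {i : Fin N}
    (hact : act π ω t = some i)
    (hiG : i ∈ (stateUpTo (greedy N T Nbr) ω (t:ℕ)).1)
    (hiP : i ∉ (stateUpTo π ω (t:ℕ)).1) :
    dSum r π ω ((t:ℕ)+1) ≤ dSum r π ω (t:ℕ) - r i + (act (greedy N T Nbr) ω t).elim 0 r := by
  unfold dSum
  have hiS : i ∈ (stateUpTo (greedy N T Nbr) ω (t:ℕ)).1 \ (stateUpTo π ω (t:ℕ)).1 :=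
    Finset.mem_sdiff.2 ⟨hiG, hiP⟩
  cases hg : act (greedy N T Nbr) ω t with
  | none =>
      simp only [Option.elim, add_zero]
      calc ∑ j ∈ (stateUpTo (greedy N T Nbr) ω ((t:ℕ)+1)).1 \ (stateUpTo π ω ((t:ℕ)+1)).1, r j
          ≤ ∑ j ∈ ((stateUpTo (greedy N T Nbr) ω (t:ℕ)).1 \ (stateUpTo π ω (t:ℕ)).1).erase i, r j := by
            apply Finset.sum_le_sum_of_subset_of_nonneg
            · intro j hj
              refine Finset.mem_erase.2 ⟨?_, mem_diff_step hj (by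
                rw [hg]; exact fun h => by cases h)⟩
              intro hji
              exact not_mem_diff_step hact (hji ▸ hj)
            · exact fun j _ _ => hr0 j
        _ = _ := by rw [Finset.sum_erase_eq_sub hiS]
  | some a =>
      simp only [Option.elim]
      calc ∑ j ∈ (stateUpTo (greedy N T Nbr) ω ((t:ℕ)+1)).1 \ (stateUpTo π ω ((t:ℕ)+1)).1, r j
          ≤ ∑ j ∈ (insert a ((stateUpTo (greedy N T Nbr) ω (t:ℕ)).1 \ (stateUpTo π ω (t:ℕ)).1)).erase i, r j := by
            apply Finset.sum_le_sum_of_subset_of_nonneg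
            · intro j hj
              refine Finset.mem_erase.2 ⟨fun hji => not_mem_diff_step hact (hji ▸ hj), ?_⟩
              by_cases hja : j = a
              · exact hja ▸ Finset.mem_insert_self _ _
              · exact Finset.mem_insert_of_mem (mem_diff_step hj (by
                  rw [hg]; intro h; exact hja (Option.some.inj h).symm))
            · exact fun j _ _ => hr0 j
        _ = (∑ j ∈ insert a ((stateUpTo (greedy N T Nbr) ω (t:ℕ)).1 \ (stateUpTo π ω (t:ℕ)).1), r j) - r i := by
            rw [Finset.sum_erase_eq_sub (Finset.mem_insert_of_mem hiS)]
        _ ≤ _ := by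
            by_cases ha : a ∈ (stateUpTo (greedy N T Nbr) ω (t:ℕ)).1 \ (stateUpTo π ω (t:ℕ)).1
            · rw [Finset.insert_eq_self.2 ha]
              linarith [hr0 a]
            · rw [Finset.sum_insert ha]
              linarith

lemma dSum_le_sync (r : Fin N → ℝ) (hr0 : ∀ i, 0 ≤ r i) (π : Policy N T Nbr)
    (ω : Flags N T) (t : Fin T) {i : Fin N}
    (hact : act π ω t = some i)
    (hgact : act (greedy N T Nbr) ω t = some i)
    (hiG : i ∈ (stateUpTo (greedy N T Nbr) ω (t:ℕ)).1)
    (hiP : i ∉ (stateUpTo π ω (t:ℕ)).1) :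
    dSum r π ω ((t:ℕ)+1) ≤ dSum r π ω (t:ℕ) - r i := by
  unfold dSum
  have hiS : i ∈ (stateUpTo (greedy N T Nbr) ω (t:ℕ)).1 \ (stateUpTo π ω (t:ℕ)).1 :=
    Finset.mem_sdiff.2 ⟨hiG, hiP⟩
  calc ∑ j ∈ (stateUpTo (greedy N T Nbr) ω ((t:ℕ)+1)).1 \ (stateUpTo π ω ((t:ℕ)+1)).1, r j
      ≤ ∑ j ∈ ((stateUpTo (greedy N T Nbr) ω (t:ℕ)).1 \ (stateUpTo π ω (t:ℕ)).1).erase i, r j := by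
        apply Finset.sum_le_sum_of_subset_of_nonneg
        · intro j hj
          have hji : j ≠ i := fun hji => not_mem_diff_step hact (hji ▸ hj)
          refine Finset.mem_erase.2 ⟨hji, mem_diff_step hj (by
            rw [hgact]; intro h; exact hji (Option.some.inj h).symm)⟩
        · exact fun j _ _ => hr0 j
    _ = _ := by rw [Finset.sum_erase_eq_sub hiS]

end Aux3

section Aux4
variable {N T : ℕ} {Nbr : Fin T → Finset (Fin N)}

/-- The per-step drift functional. -/
noncomputable def hfun (r : Fin N → ℝ) (c : ℝ) (π : Policy N T Nbr) (t : Fin T)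
    (ω : Flags N T) : ℝ :=
  (∑ i : Fin N, if act π ω t = some i ∧
      (∀ j, i ≤ j → j ∉ avail (greedy N T Nbr) ω t) then r i else 0)
  + c * dSum r π ω ((t:ℕ)+1) - c * dSum r π ω (t:ℕ)
  - c * (act (greedy N T Nbr) ω t).elim 0 r

lemma weight_factor {pv : Fin N → ℝ} (ω : Flags N T) (i : Fin N) (t : Fin T) :
    weight pv ω = (if ω i t then pv i else 1 - pv i) *
      ∏ q ∈ (Finset.univ : Finset (Fin N × Fin T)).erase (i, t),
        (if ω q.1 q.2 then pv q.1 else 1 - pv q.1) := by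
  unfold weight
  rw [← Fintype.prod_prod_type (f := fun x : Fin N × Fin T =>
    (if ω x.1 x.2 then pv x.1 else 1 - pv x.1))]
  exact (Finset.mul_prod_erase _ _ (Finset.mem_univ (i, t))).symm

lemma restProd_flip {pv : Fin N → ℝ} (ω : Flags N T) (i : Fin N) (t : Fin T) :
    (∏ q ∈ (Finset.univ : Finset (Fin N × Fin T)).erase (i, t),
        (if (flipAt ω i t) q.1 q.2 then pv q.1 else 1 - pv q.1)) =
    ∏ q ∈ (Finset.univ : Finset (Fin N × Fin T)).erase (i, t),
        (if ω q.1 q.2 then pv q.1 else 1 - pv q.1) := by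
  apply Finset.prod_congr rfl
  intro q hq
  have hne : ¬(q.1 = i ∧ q.2 = t) := by
    intro hc
    exact (Finset.mem_erase.1 hq).1 (Prod.ext hc.1 hc.2)
  rw [flipAt_ne hne]

lemma restProd_nonneg {pv : Fin N → ℝ} (hpv0 : ∀ i, 0 ≤ pv i) (hpv1 : ∀ i, pv i ≤ 1)
    (ω : Flags N T) (i : Fin N) (t : Fin T) :
    0 ≤ ∏ q ∈ (Finset.univ : Finset (Fin N × Fin T)).erase (i, t),
        (if ω q.1 q.2 then pv q.1 else 1 - pv q.1) := by
  apply Finset.prod_nonneg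
  intro q _
  by_cases h : ω q.1 q.2 <;> simp [h]
  · exact hpv0 q.1
  · linarith [hpv1 q.1]

lemma weight_nonneg {pv : Fin N → ℝ} (hpv0 : ∀ i, 0 ≤ pv i) (hpv1 : ∀ i, pv i ≤ 1)
    (ω : Flags N T) : 0 ≤ weight pv ω := by
  apply Finset.prod_nonneg
  intro i _
  apply Finset.prod_nonneg
  intro s _
  by_cases h : ω i s <;> simp [h]
  · exact hpv0 i
  · linarith [hpv1 i]

lemma step_expect (hN : 0 < N) (r : Fin N → ℝ) (hr0 : ∀ i, 0 ≤ r i)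
    (pv : Fin N → ℝ) (hpv0 : ∀ i, 0 ≤ pv i) (hpv1 : ∀ i, pv i ≤ 1)
    (c : ℝ) (hc0 : 0 ≤ c) (hc : ∀ i, 1 - pv i ≤ c * (1 + pv i))
    (π : Policy N T Nbr) (t : Fin T) :
    expect pv (hfun r c π t) ≤ 0 := by
  classical
  -- value of the loss term
  have hXval : ∀ (ω : Flags N T) (i0 : Fin N), act π ω t = some i0 →
      (∑ i : Fin N, if act π ω t = some i ∧
        (∀ j, i ≤ j → j ∉ avail (greedy N T Nbr) ω t) then r i else 0)
      = if (∀ j, i0 ≤ j → j ∉ avail (greedy N T Nbr) ω t) then r i0 else 0 := by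
    intro ω i0 h
    rw [Finset.sum_eq_single i0]
    · rw [h]
      by_cases hO : ∀ j, i0 ≤ j → j ∉ avail (greedy N T Nbr) ω t
      · rw [if_pos ⟨rfl, hO⟩, if_pos hO]
      · rw [if_neg (fun hq => hO hq.2), if_neg hO]
    · intro i _ hne
      rw [if_neg]
      rintro ⟨h1, -⟩
      exact hne (Option.some.inj (h1.symm.trans h))
    · exact fun h' => absurd (Finset.mem_univ i0) h'
  have hXnone : ∀ (ω : Flags N T), act π ω t = none →
      (∑ i : Fin N, if act π ω t = some i ∧
        (∀ j, i ≤ j → j ∉ avail (greedy N T Nbr) ω t) then r i else 0) = 0 := by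
    intro ω h
    apply Finset.sum_eq_zero
    intro i _
    rw [if_neg]
    rintro ⟨h1, -⟩
    rw [h] at h1
    cases h1
  -- the "attempt" predicates
  set P0 : Flags N T → Prop := fun ω => ∃ i, act π ω t = some i ∧
      i ∈ (stateUpTo (greedy N T Nbr) ω (t:ℕ)).1 ∧ i ∉ (stateUpTo π ω (t:ℕ)).1 ∧
      ω i t = false with hP0
  set P1 : Flags N T → Prop := fun ω => ∃ i, act π ω t = some i ∧
      i ∈ (stateUpTo (greedy N T Nbr) ω (t:ℕ)).1 ∧ i ∉ (stateUpTo π ω (t:ℕ)).1 ∧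
      ω i t = true with hP1
  -- pointwise bound outside attempts
  have hrest : ∀ ω : Flags N T, ¬ P0 ω → hfun r c π t ω ≤ 0 := by
    intro ω h0
    have hd := dSum_le_general r hr0 π ω t
    have hX : (∑ i : Fin N, if act π ω t = some i ∧
        (∀ j, i ≤ j → j ∉ avail (greedy N T Nbr) ω t) then r i else 0) = 0 := by
      rcases Option.eq_none_or_eq_some (act π ω t) with hact | ⟨i0, hact⟩
      · exact hXnone ω hact
      · rw [hXval ω i0 hact]
        rw [if_neg]
        intro hO
        apply h0
        have hnav := hO i0 le_rfl
        rw [not_mem_avail] at hnav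
        have hav : i0 ∈ avail π ω t := by
          have := π.feasible t (avail π ω t) (stateUpTo π ω (t:ℕ)).2 i0 hact
          exact (Finset.mem_inter.1 this).1
        have hiP : i0 ∉ (stateUpTo π ω (t:ℕ)).1 := by
          intro hmem
          have : i0 ∉ avail π ω t := not_mem_avail.2 ⟨hmem, hnav.2⟩
          exact this hav
        exact ⟨i0, hact, hnav.1, hiP, hnav.2⟩
    unfold hfun
    rw [hX]
    have := mul_le_mul_of_nonneg_left hd hc0
    rw [mul_add] at this
    linarith
  -- the pair bound
  have hpair : ∀ (ω : Flags N T) (i : Fin N), act π ω t = some i →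
      i ∈ (stateUpTo (greedy N T Nbr) ω (t:ℕ)).1 → i ∉ (stateUpTo π ω (t:ℕ)).1 →
      ω i t = false →
      weight pv ω * hfun r c π t ω +
        weight pv (flipAt ω i t) * hfun r c π t (flipAt ω i t) ≤ 0 := by
    intro ω i hact hiG hiP hflag
    have hactσ : act π (flipAt ω i t) t = some i := (act_flipAt π ω t hiP).trans hact
    have hσflag : (flipAt ω i t) i t = true := by rw [flipAt_self, hflag]; rfl
    have hiGσ : i ∈ (stateUpTo (greedy N T Nbr) (flipAt ω i t) (t:ℕ)).1 := by
      rw [stateUpTo_flipAt]; exact hiG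
    have hiPσ : i ∉ (stateUpTo π (flipAt ω i t) (t:ℕ)).1 := by
      rw [stateUpTo_flipAt]; exact hiP
    have hiavσ : i ∈ avail (greedy N T Nbr) (flipAt ω i t) t := by
      by_contra h
      rw [not_mem_avail] at h
      have := h.2
      rw [hσflag] at this
      exact Bool.noConfusion this
    have hXσ : (∑ k : Fin N, if act π (flipAt ω i t) t = some k ∧
        (∀ j, k ≤ j → j ∉ avail (greedy N T Nbr) (flipAt ω i t) t) then r k else 0) = 0 := by
      rw [hXval (flipAt ω i t) i hactσ, if_neg]
      intro hO
      exact hO i le_rfl hiavσ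
    have hiNbr : i ∈ Nbr t :=
      (Finset.mem_inter.1 (π.feasible t (avail π ω t) (stateUpTo π ω (t:ℕ)).2 i hact)).2
    -- weight factorization
    have hwω : weight pv ω = (1 - pv i) *
        ∏ q ∈ (Finset.univ : Finset (Fin N × Fin T)).erase (i, t),
          (if ω q.1 q.2 then pv q.1 else 1 - pv q.1) := by
      rw [weight_factor ω i t, hflag]
      simp
    have hwσ : weight pv (flipAt ω i t) = pv i *
        ∏ q ∈ (Finset.univ : Finset (Fin N × Fin T)).erase (i, t),
          (if ω q.1 q.2 then pv q.1 else 1 - pv q.1) := by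
      rw [weight_factor (flipAt ω i t) i t, hσflag, restProd_flip]
      simp
    have hR := restProd_nonneg hpv0 hpv1 ω i t
    have key : (1 - pv i) * hfun r c π t ω + pv i * hfun r c π t (flipAt ω i t) ≤ 0 := by
      by_cases hO : ∀ j, i ≤ j → j ∉ avail (greedy N T Nbr) ω t
      · -- loss case
        have h0le : hfun r c π t ω ≤ r i - c * r i := by
          unfold hfun
          rw [hXval ω i hact, if_pos hO]
          have hd := dSum_le_attempt r hr0 π ω t hact hiG hiP
          have := mul_le_mul_of_nonneg_left hd hc0
          have hB : 0 ≤ (act (greedy N T Nbr) ω t).elim 0 r := by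
            cases hg : act (greedy N T Nbr) ω t with
            | none => simp
            | some a => simpa using hr0 a
          nlinarith
        have hgσ : act (greedy N T Nbr) (flipAt ω i t) t = some i := by
          apply greedy_act_eq hiavσ hiNbr
          intro j hij
          have hj := hO j hij.le
          rw [not_mem_avail] at hj ⊢
          refine ⟨by rw [stateUpTo_flipAt]; exact hj.1, ?_⟩
          rw [flipAt_ne (fun hcon => (ne_of_gt hij) hcon.1)]
          exact hj.2
        have h1le : hfun r c π t (flipAt ω i t) ≤ -(2 * (c * r i)) := by
          unfold hfun
          rw [hXσ, hgσ]
          have hd := dSum_le_sync r hr0 π (flipAt ω i t) t hactσ hgσ hiGσ hiPσ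
          have := mul_le_mul_of_nonneg_left hd hc0
          simp only [Option.elim]
          nlinarith
        have hq0 := hpv0 i
        have hq1 := hpv1 i
        have hkey := hc i
        have hri := hr0 i
        nlinarith [mul_le_mul_of_nonneg_left h0le (by linarith : (0:ℝ) ≤ 1 - pv i),
          mul_le_mul_of_nonneg_left h1le (hpv0 i),
          mul_nonneg (mul_nonneg hq0 hc0) hri,
          mul_nonneg (sub_nonneg.2 (hc i)) hri]
      · -- no-loss case
        have h0le : hfun r c π t ω ≤ -(c * r i) := by
          unfold hfun
          rw [hXval ω i hact, if_neg hO]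
          have hd := dSum_le_attempt r hr0 π ω t hact hiG hiP
          have := mul_le_mul_of_nonneg_left hd hc0
          nlinarith
        have h1le : hfun r c π t (flipAt ω i t) ≤ -(c * r i) := by
          unfold hfun
          rw [hXσ]
          have hd := dSum_le_attempt r hr0 π (flipAt ω i t) t hactσ hiGσ hiPσ
          have := mul_le_mul_of_nonneg_left hd hc0
          nlinarith
        have hq0 := hpv0 i
        have hq1 := hpv1 i
        nlinarith [mul_le_mul_of_nonneg_left h0le (by linarith : (0:ℝ) ≤ 1 - pv i),
          mul_le_mul_of_nonneg_left h1le (hpv0 i),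
          mul_nonneg hc0 (hr0 i)]
    calc weight pv ω * hfun r c π t ω +
          weight pv (flipAt ω i t) * hfun r c π t (flipAt ω i t)
        = (∏ q ∈ (Finset.univ : Finset (Fin N × Fin T)).erase (i, t),
            (if ω q.1 q.2 then pv q.1 else 1 - pv q.1)) *
          ((1 - pv i) * hfun r c π t ω + pv i * hfun r c π t (flipAt ω i t)) := by
          rw [hwω, hwσ]; ring
      _ ≤ 0 := mul_nonpos_of_nonneg_of_nonpos hR key
  -- assemble the expectation
  unfold _root_.expect
  set F : Flags N T → ℝ := fun ω => weight pv ω * hfun r c π t ω with hF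
  set σ : Flags N T → Flags N T := fun ω => flipAt ω ((act π ω t).getD ⟨0, hN⟩) t with hσ
  have hσP0 : ∀ ω, P0 ω → (σ ω = flipAt ω ((act π ω t).getD ⟨0, hN⟩) t) := fun _ _ => rfl
  rw [← Finset.sum_filter_add_sum_filter_not Finset.univ P0
    (fun ω => weight pv ω * hfun r c π t ω)]
  rw [← Finset.sum_filter_add_sum_filter_not (Finset.univ.filter (fun ω => ¬ P0 ω)) P1
    (fun ω => weight pv ω * hfun r c π t ω)]
  have hrest_sum : ∑ ω ∈ (Finset.univ.filter (fun ω => ¬ P0 ω)).filter (fun ω => ¬ P1 ω),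
      weight pv ω * hfun r c π t ω ≤ 0 := by
    apply Finset.sum_nonpos
    intro ω hω
    rw [Finset.mem_filter] at hω
    have h0 : ¬ P0 ω := (Finset.mem_filter.1 hω.1).2
    exact mul_nonpos_of_nonneg_of_nonpos (weight_nonneg hpv0 hpv1 ω) (hrest ω h0)
  have hfilter_eq : (Finset.univ.filter (fun ω => ¬ P0 ω)).filter P1 =
      Finset.univ.filter P1 := by
    ext ω
    simp only [Finset.mem_filter, Finset.mem_univ, true_and]
    constructor
    · rintro ⟨_, h⟩; exact h
    · intro h1
      refine ⟨?_, h1⟩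
      intro hp0
      obtain ⟨i, hact, -, -, hfl⟩ := hp0
      obtain ⟨i', hact', -, -, hfl'⟩ := h1
      rw [hact'] at hact
      have : i' = i := Option.some.inj hact
      rw [this] at hfl'
      rw [hfl'] at hfl
      exact Bool.noConfusion hfl
  have hbij : ∑ ω ∈ Finset.univ.filter P1, weight pv ω * hfun r c π t ω =
      ∑ ω ∈ Finset.univ.filter P0, weight pv (σ ω) * hfun r c π t (σ ω) := by
    apply Finset.sum_nbij' σ σ
    · -- maps P1 to P0
      intro ω hω
      obtain ⟨i, hact, hiG, hiP, hfl⟩ := (Finset.mem_filter.1 hω).2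
      have hσω : σ ω = flipAt ω i t := by rw [hσ]; simp [hact]
      refine Finset.mem_filter.2 ⟨Finset.mem_univ _, ⟨i, ?_, ?_, ?_, ?_⟩⟩
      · rw [hσω]; exact (act_flipAt π ω t hiP).trans hact
      · rw [hσω, stateUpTo_flipAt]; exact hiG
      · rw [hσω, stateUpTo_flipAt]; exact hiP
      · rw [hσω, flipAt_self, hfl]; rfl
    · -- maps P0 to P1
      intro ω hω
      obtain ⟨i, hact, hiG, hiP, hfl⟩ := (Finset.mem_filter.1 hω).2
      have hσω : σ ω = flipAt ω i t := by rw [hσ]; simp [hact]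
      refine Finset.mem_filter.2 ⟨Finset.mem_univ _, ⟨i, ?_, ?_, ?_, ?_⟩⟩
      · rw [hσω]; exact (act_flipAt π ω t hiP).trans hact
      · rw [hσω, stateUpTo_flipAt]; exact hiG
      · rw [hσω, stateUpTo_flipAt]; exact hiP
      · rw [hσω, flipAt_self, hfl]; rfl
    · -- left inverse on P1
      intro ω hω
      obtain ⟨i, hact, hiG, hiP, hfl⟩ := (Finset.mem_filter.1 hω).2
      have hσω : σ ω = flipAt ω i t := by rw [hσ]; simp [hact]
      have hactσ : act π (σ ω) t = some i := by
        rw [hσω]; exact (act_flipAt π ω t hiP).trans hact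
      have : σ (σ ω) = flipAt (σ ω) i t := by show flipAt (σ ω) ((act π (σ ω) t).getD ⟨0, hN⟩) t = _; rw [hactσ]; rfl
      rw [this, hσω, flipAt_flipAt]
    · -- right inverse on P0
      intro ω hω
      obtain ⟨i, hact, hiG, hiP, hfl⟩ := (Finset.mem_filter.1 hω).2
      have hσω : σ ω = flipAt ω i t := by rw [hσ]; simp [hact]
      have hactσ : act π (σ ω) t = some i := by
        rw [hσω]; exact (act_flipAt π ω t hiP).trans hact
      have : σ (σ ω) = flipAt (σ ω) i t := by show flipAt (σ ω) ((act π (σ ω) t).getD ⟨0, hN⟩) t = _; rw [hactσ]; rfl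
      rw [this, hσω, flipAt_flipAt]
    · intro ω hω
      obtain ⟨i, hact, hiG, hiP, hfl⟩ := (Finset.mem_filter.1 hω).2
      have hσω : σ ω = flipAt ω i t := by rw [hσ]; simp [hact]
      have hactσ : act π (σ ω) t = some i := by
        rw [hσω]; exact (act_flipAt π ω t hiP).trans hact
      have hss : σ (σ ω) = ω := by
        have h2 : σ (σ ω) = flipAt (σ ω) i t := by show flipAt (σ ω) ((act π (σ ω) t).getD ⟨0, hN⟩) t = _; rw [hactσ]; rfl
        rw [h2, hσω, flipAt_flipAt]
      rw [hss]
  have hpair_sum : (∑ ω ∈ Finset.univ.filter P0, weight pv ω * hfun r c π t ω) +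
      ∑ ω ∈ Finset.univ.filter P1, weight pv ω * hfun r c π t ω ≤ 0 := by
    rw [hbij, ← Finset.sum_add_distrib]
    apply Finset.sum_nonpos
    intro ω hω
    obtain ⟨i, hact, hiG, hiP, hfl⟩ := (Finset.mem_filter.1 hω).2
    have hσω : σ ω = flipAt ω i t := by rw [hσ]; simp [hact]
    rw [hσω]
    exact hpair ω i hact hiG hiP hfl
  rw [hfilter_eq]
  linarith

end Aux4

section Aux5
variable {N T : ℕ} {Nbr : Fin T → Finset (Fin N)}

lemma dSum_zero (r : Fin N → ℝ) (π : Policy N T Nbr) (ω : Flags N T) :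
    dSum r π ω 0 = 0 := by
  unfold dSum stateUpTo
  simp

lemma hfun_path (r : Fin N → ℝ) (c : ℝ) (π : Policy N T Nbr) (ω : Flags N T) :
    ∑ t : Fin T, hfun r c π t ω =
      (∑ t : Fin T, ∑ i : Fin N, if act π ω t = some i ∧
        (∀ j, i ≤ j → j ∉ avail (greedy N T Nbr) ω t) then r i else 0)
      + c * dSum r π ω T - c * reward r (greedy N T Nbr) ω := by
  have htel : ∑ t : Fin T, (c * dSum r π ω ((t:ℕ)+1) - c * dSum r π ω (t:ℕ)) =
      c * dSum r π ω T - c * dSum r π ω 0 := by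
    rw [Fin.sum_univ_eq_sum_range (fun n => c * dSum r π ω (n+1) - c * dSum r π ω n) T]
    exact Finset.sum_range_sub (fun n => c * dSum r π ω n) T
  have hsplit : ∀ t : Fin T, hfun r c π t ω =
      (∑ i : Fin N, if act π ω t = some i ∧
        (∀ j, i ≤ j → j ∉ avail (greedy N T Nbr) ω t) then r i else 0)
      + (c * dSum r π ω ((t:ℕ)+1) - c * dSum r π ω (t:ℕ))
      - c * (act (greedy N T Nbr) ω t).elim 0 r := by
    intro t
    unfold hfun
    ring
  rw [Finset.sum_congr rfl (fun t _ => hsplit t), Finset.sum_sub_distrib,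
    Finset.sum_add_distrib, htel, dSum_zero]
  unfold reward
  rw [Finset.mul_sum]
  ring

lemma expect_sum_comm (pv : Fin N → ℝ) (F : Fin T → Flags N T → ℝ) :
    ∑ t : Fin T, expect pv (F t) = expect pv (fun ω => ∑ t : Fin T, F t ω) := by
  unfold _root_.expect
  rw [Finset.sum_comm]
  exact Finset.sum_congr rfl (fun ω _ => (Finset.mul_sum _ _ _).symm)

lemma expect_decomp (pv : Fin N → ℝ) (f g h k : Flags N T → ℝ) (c : ℝ)
    (hf : ∀ ω, f ω = g ω + c * h ω - c * k ω) :
    expect pv f = expect pv g + c * expect pv h - c * expect pv k := by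
  unfold _root_.expect
  rw [Finset.sum_congr rfl (fun ω _ => (by rw [hf ω]; ring :
    weight pv ω * f ω = weight pv ω * g ω + c * (weight pv ω * h ω)
      - c * (weight pv ω * k ω)))]
  rw [Finset.sum_sub_distrib, Finset.sum_add_distrib, ← Finset.mul_sum, ← Finset.mul_sum]

end Aux5

theorem aux_lost_le_geometric
    (N T : ℕ) (hN : 0 < N)
    (r : Fin N → ℝ) (hr0 : ∀ i, 0 ≤ r i) (hrmono : Monotone r)
    (Nbr : Fin T → Finset (Fin N))
    (pv : Fin N → ℝ) (hpv0 : ∀ i, 0 ≤ pv i) (hpv1 : ∀ i, pv i ≤ 1)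
    (p : ℝ) (hp : p = ⨅ i, pv i)
    (π : Policy N T Nbr) :
    lost N T Nbr r pv π ≤ ((1 - p) / (1 + p)) * greedyVal N T Nbr r pv := by
  have hNE : Nonempty (Fin N) := ⟨⟨0, hN⟩⟩
  set c : ℝ := (1 - p) / (1 + p) with hcdef
  have hbdd : BddBelow (Set.range pv) := (Set.finite_range pv).bddBelow
  have hp0 : 0 ≤ p := hp ▸ le_ciInf hpv0
  have hp1 : p ≤ 1 := by
    have h1 : p ≤ pv ⟨0, hN⟩ := hp ▸ ciInf_le hbdd ⟨0, hN⟩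
    exact h1.trans (hpv1 _)
  have h1p : (0:ℝ) < 1 + p := by linarith
  have hc0 : 0 ≤ c := div_nonneg (by linarith) h1p.le
  have hc : ∀ i, 1 - pv i ≤ c * (1 + pv i) := by
    intro i
    have hpi : p ≤ pv i := hp ▸ ciInf_le hbdd i
    rw [hcdef, div_mul_eq_mul_div, le_div_iff₀ h1p]
    nlinarith [hpv0 i, hpv1 i]
  have hstep : ∀ t : Fin T, expect pv (hfun r c π t) ≤ 0 :=
    fun t => step_expect hN r hr0 pv hpv0 hpv1 c hc0 hc π t
  have hsum : ∑ t : Fin T, expect pv (hfun r c π t) ≤ 0 :=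
    Finset.sum_nonpos (fun t _ => hstep t)
  have hswap : ∑ t : Fin T, expect pv (hfun r c π t) =
      lost N T Nbr r pv π + c * expect pv (fun ω => dSum r π ω T)
        - c * greedyVal N T Nbr r pv := by
    rw [expect_sum_comm pv (fun t ω => hfun r c π t ω)]
    exact expect_decomp pv _ _ _ _ c (fun ω => hfun_path r c π ω)
  have hDpos : 0 ≤ expect pv (fun ω => dSum r π ω T) := by
    unfold _root_.expect
    apply Finset.sum_nonneg
    intro ω _
    exact mul_nonneg (weight_nonneg hpv0 hpv1 ω) (dSum_nonneg r hr0 π ω T)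
  have := hswap ▸ hsum
  nlinarith [mul_nonneg hc0 hDpos]

/-- **Proposition 2.**  Under the shared-Bernoulli coupling of Greedy and any
benchmark policy `π` (in particular the optimal clairvoyant policy `OPT`) with
geometric usage durations `F i = Geometric (pv i)`, if `p = min_i pv i` then
`LOST ≤ ((1 - p)/(1 + p)) · Greedy(I)`. -/
theorem lost_le_geometric
    (N T : ℕ) (hN : 0 < N)
    (r : Fin N → ℝ) (hr0 : ∀ i, 0 ≤ r i) (hrmono : Monotone r)
    (Nbr : Fin T → Finset (Fin N))
    (pv : Fin N → ℝ) (hpv0 : ∀ i, 0 ≤ pv i) (hpv1 : ∀ i, pv i ≤ 1)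
    (p : ℝ) (hp : p = ⨅ i, pv i)
    (π : Policy N T Nbr) :
    lost N T Nbr r pv π ≤ ((1 - p) / (1 + p)) * greedyVal N T Nbr r pv := by
  exact aux_lost_le_geometric N T hN r hr0 hrmono Nbr pv hpv0 hpv1 p hp π
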